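/- For each attractor–repeller pair (A, A*) of f there is a continuous function g : X → [0,1] with g⁻¹(0) = A, g⁻¹(1) = A*, and g(f(x)) < g(x) for every x ∈ X \ (A ∪ A*). -/

import Mathlib

open Set Filter Topology

variable {X : Type*} [MetricSpace X]

/-- An ε-chain from `x` to `y` for `f`: a sequence `x = c 0, ..., c n = y` with `n ≥ 1`
and `dist (f (c i)) (c (i+1)) < ε` for all `i < n`. -/
def EpsChain (f : X → X) (ε : ℝ) (x y : X) : Prop :=
  ∃ n : ℕ, 1 ≤ n ∧ ∃ c : ℕ → X, c 0 = x ∧ c n = y ∧ ∀ i < n, dist (f (c i)) (c (i + 1)) < ε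

/-- The chain recurrent set of `f`. -/
def ChainRecurrentSet (f : X → X) : Set X := {x | ∀ ε > 0, EpsChain f ε x x}

/-- `U` is an (open) isolating neighborhood for `A`. -/
def IsIsolatingNbhd (f : X → X) (A U : Set X) : Prop :=
  IsOpen U ∧ A ⊆ U ∧ f '' closure U ⊆ U ∧ (⋂ n : ℕ, f^[n] '' closure U) = A

/-- `A` is an attractor for `f`. -/
def IsAttractor (f : X → X) (A : Set X) : Prop :=
  IsCompact A ∧ ∃ U, IsIsolatingNbhd f A U

/-- `(A, Astar)` is an attractor–repeller pair for the homeomorphism `f`. -/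
def IsDualPair (f : X ≃ₜ X) (A Astar : Set X) : Prop :=
  IsCompact A ∧ ∃ U, IsIsolatingNbhd (⇑f) A U ∧
    Astar = ⋂ n : ℕ, (⇑f)^[n] ⁻¹' closure ((closure U)ᶜ)

open Metric in
lemma conley_aux [CompactSpace X] (f : X ≃ₜ X) (U : Set X) (hUopen : IsOpen U)
    (hfU : ⇑f '' closure U ⊆ U) (hne : (closure U).Nonempty) (hproper : closure U ≠ univ) :
    ∃ g : X → ℝ, Continuous g ∧ (∀ x, g x ∈ Set.Icc (0:ℝ) 1) ∧
      g ⁻¹' {0} = (⋂ n : ℕ, (⇑f)^[n] '' closure U) ∧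
      g ⁻¹' {1} = (⋂ n : ℕ, (⇑f)^[n] ⁻¹' closure ((closure U)ᶜ)) ∧
      ∀ x ∉ (⋂ n : ℕ, (⇑f)^[n] '' closure U) ∪ (⋂ n : ℕ, (⇑f)^[n] ⁻¹' closure ((closure U)ᶜ)),
        g (f x) < g x := by
  set C := closure U with hC
  set K := closure Cᶜ with hK
  have hCcl : IsClosed C := isClosed_closure
  have hCcomp : IsCompact C := hCcl.isCompact
  have hKcl : IsClosed K := isClosed_closure
  have hUC : U ⊆ C := subset_closure
  have hKUc : K ⊆ Uᶜ := by
    rw [hK]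
    have : Cᶜ ⊆ Uᶜ := compl_subset_compl.2 hUC
    calc closure Cᶜ ⊆ closure Uᶜ := closure_mono this
    _ = Uᶜ := (hUopen.isClosed_compl).closure_eq
  have hCcK : Cᶜ ⊆ K := subset_closure
  have hKne : K.Nonempty := by
    rcases nonempty_compl.2 hproper with ⟨x, hx⟩
    exact ⟨x, hCcK hx⟩
  have hfKC : ⇑f ⁻¹' K ⊆ Cᶜ := by
    intro x hx
    intro hxC
    exact (hKUc hx) (hfU ⟨x, hxC, rfl⟩)
  set V : ℕ → Set X := fun n => (⇑f)^[n] '' C with hV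
  set W : ℕ → Set X := fun n => (⇑f)^[n] ⁻¹' K with hW
  have hV0 : V 0 = C := by simp [hV]
  have hVsucc : ∀ n, V (n + 1) = ⇑f '' V n := by
    intro n
    simp only [hV, Function.iterate_succ', Set.image_comp]
  have hVanti : ∀ n, V (n + 1) ⊆ V n := by
    intro n
    simp only [hV, Function.iterate_succ, Set.image_comp]
    exact Set.image_mono (hfU.trans hUC)
  have hVmono : ∀ m n, m ≤ n → V n ⊆ V m := fun m n h =>
    antitone_nat_of_succ_le hVanti h
  have hVcomp : ∀ n, IsCompact (V n) := fun n =>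
    (hCcomp.image ((f.continuous).iterate n))
  have hVcl : ∀ n, IsClosed (V n) := fun n => (hVcomp n).isClosed
  have hVne : ∀ n, (V n).Nonempty := fun n => hne.image _
  have hAne : (⋂ n, V n).Nonempty :=
    IsCompact.nonempty_iInter_of_sequence_nonempty_isCompact_isClosed V hVanti hVne (hV0 ▸ hCcomp) hVcl
  have hAU : (⋂ n, V n) ⊆ U := by
    intro x hx
    have : x ∈ V 1 := mem_iInter.1 hx 1
    rw [hVsucc 0, hV0] at this
    exact hfU this
  have hfV : ∀ n x, x ∈ V n → f x ∈ V (n + 1) := by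
    intro n x hx
    rw [hVsucc n]
    exact ⟨x, hx, rfl⟩
  have hfA : ∀ x ∈ ⋂ n, V n, f x ∈ ⋂ n, V n := by
    intro x hx
    rw [mem_iInter] at hx ⊢
    intro n
    exact hVanti n (hfV n _ (hx n))
  have hWanti : ∀ n, W (n + 1) ⊆ W n := by
    intro n x hx
    have h1 : (⇑f)^[n+1] x ∈ K := hx
    rw [Function.iterate_succ_apply'] at h1
    exact hCcK (hfKC h1)
  have hWcl : ∀ n, IsClosed (W n) := fun n => hKcl.preimage ((f.continuous).iterate n)
  have hWne : ∀ n, (W n).Nonempty := by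
    intro n
    rcases hKne with ⟨y, hy⟩
    rcases (f.surjective.iterate n) y with ⟨x, rfl⟩
    exact ⟨x, hy⟩
  have hAsne : (⋂ n, W n).Nonempty :=
    IsCompact.nonempty_iInter_of_sequence_nonempty_isCompact_isClosed W hWanti hWne
      ((hWcl 0).isCompact) hWcl
  have hAsU : (⋂ n, W n) ⊆ Uᶜ := by
    intro x hx
    exact hKUc (by simpa [hW] using mem_iInter.1 hx 0)
  have hdisj : Disjoint (⋂ n, V n) (⋂ n, W n) :=
    Set.disjoint_left.2 fun x hxA hxAs => (hAsU hxAs) (hAU hxA)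
  have hfAs : ∀ x ∈ ⋂ n, W n, f x ∈ ⋂ n, W n := by
    intro x hx
    rw [mem_iInter] at hx ⊢
    intro n
    have := hx (n + 1)
    simpa [hW, Function.iterate_succ_apply] using this
  have hfAs' : ∀ x, f x ∈ (⋂ n, W n) → x ∈ ⋂ n, W n := by
    intro x hx
    rw [mem_iInter] at hx ⊢
    intro n
    cases n with
    | zero =>
      have : f x ∈ K := by simpa [hW] using hx 0
      exact hCcK (hfKC this)
    | succ m =>
      have := hx m
      simpa [hW, Function.iterate_succ_apply] using this
  -- Stage 2
  set A := ⋂ n, V n with hA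
  set As := ⋂ n, W n with hAs
  have hAcl : IsClosed A := isClosed_iInter hVcl
  have hAscl : IsClosed As := isClosed_iInter hWcl
  set dd : X → ℝ := fun x => infDist x A + infDist x As with hdd
  have hden : ∀ x, 0 < dd x := by
    intro x
    rcases lt_or_eq_of_le (add_nonneg (infDist_nonneg (s := A) (x := x))
      (infDist_nonneg (s := As) (x := x))) with h | h
    · exact h
    · exfalso
      have h1 : infDist x A = 0 ∧ infDist x As = 0 := by
        constructor <;> nlinarith [infDist_nonneg (s := A) (x := x), infDist_nonneg (s := As) (x := x)]
      have hxA : x ∈ A := (hAcl.mem_iff_infDist_zero hAne).2 h1.1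
      have hxAs : x ∈ As := (hAscl.mem_iff_infDist_zero hAsne).2 h1.2
      exact (Set.disjoint_left.1 hdisj hxA) hxAs
  set h : X → ℝ := fun x => infDist x A / dd x with hh
  have hhcont : Continuous h := by
    apply Continuous.div (continuous_infDist_pt A)
      ((continuous_infDist_pt A).add (continuous_infDist_pt As))
    intro x
    exact (hden x).ne'
  have hh0 : ∀ x, 0 ≤ h x := fun x => div_nonneg infDist_nonneg (hden x).le
  have hh1 : ∀ x, h x ≤ 1 := by
    intro x
    rw [hh, div_le_one (hden x)]
    exact le_add_of_nonneg_right infDist_nonneg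
  have hhA : ∀ x, h x = 0 ↔ x ∈ A := by
    intro x
    rw [hh]
    simp only [div_eq_zero_iff, (hden x).ne', or_false]
    exact ((hAcl.mem_iff_infDist_zero hAne).symm)
  have hhAs : ∀ x, h x = 1 ↔ x ∈ As := by
    intro x
    rw [hh, div_eq_one_iff_eq (hden x).ne']
    have hdx : dd x = infDist x A + infDist x As := rfl
    rw [hdx]
    constructor
    · intro he
      have h2 : infDist x As = 0 := by linarith
      exact (hAscl.mem_iff_infDist_zero hAsne).2 h2
    · intro hm
      rw [infDist_zero_of_mem hm, add_zero]
  -- L1 : uniform smallness of h on V k for large k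
  have L1 : ∀ ε : ℝ, 0 < ε → ∃ k, ∀ y ∈ V k, h y < ε := by
    intro ε hε
    by_contra hcon
    push_neg at hcon
    set S : ℕ → Set X := fun n => V n ∩ {y | ε ≤ h y} with hS
    have hScl : ∀ n, IsClosed (S n) :=
      fun n => (hVcl n).inter (isClosed_le continuous_const hhcont)
    have hSanti : ∀ n, S (n + 1) ⊆ S n :=
      fun n => inter_subset_inter_left _ (hVanti n)
    have hSne : ∀ n, (S n).Nonempty := by
      intro n
      rcases hcon n with ⟨y, hy, hy2⟩
      exact ⟨y, hy, hy2⟩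
    have := IsCompact.nonempty_iInter_of_sequence_nonempty_isCompact_isClosed S hSanti hSne
      ((hScl 0).isCompact) hScl
    rcases this with ⟨y, hy⟩
    rw [mem_iInter] at hy
    have hyA : y ∈ A := mem_iInter.2 fun n => (hy n).1
    have : h y = 0 := (hhA y).2 hyA
    have := (hy 0).2
    simp only [mem_setOf_eq] at this
    linarith
  -- Stage 3 : the sup function s
  set s : X → ℝ := fun x => ⨆ n : ℕ, h ((⇑f)^[n] x) with hsdef
  have hbdd : ∀ x, BddAbove (Set.range fun n : ℕ => h ((⇑f)^[n] x)) := by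
    intro x
    exact ⟨1, by rintro y ⟨n, rfl⟩; exact hh1 _⟩
  have hs_le1 : ∀ x, s x ≤ 1 := fun x => ciSup_le fun n => hh1 _
  have hh_le_s : ∀ x n, h ((⇑f)^[n] x) ≤ s x := fun x n => le_ciSup (hbdd x) n
  have hhx_le_s : ∀ x, h x ≤ s x := by
    intro x
    have := hh_le_s x 0
    simpa using this
  have hs0 : ∀ x, 0 ≤ s x := fun x => le_trans (hh0 x) (hhx_le_s x)
  have hfnA : ∀ n x, x ∈ A → (⇑f)^[n] x ∈ A := by
    intro n
    induction n with
    | zero => intro x hx; simpa using hx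
    | succ m ih =>
      intro x hx
      rw [Function.iterate_succ_apply']
      exact hfA _ (ih x hx)
  have hfnAs : ∀ n x, x ∈ As → (⇑f)^[n] x ∈ As := by
    intro n
    induction n with
    | zero => intro x hx; simpa using hx
    | succ m ih =>
      intro x hx
      rw [Function.iterate_succ_apply']
      exact hfAs _ (ih x hx)
  have hfnAs' : ∀ n x, (⇑f)^[n] x ∈ As → x ∈ As := by
    intro n
    induction n with
    | zero => intro x hx; simpa using hx
    | succ m ih =>
      intro x hx
      rw [Function.iterate_succ_apply'] at hx
      exact ih x (hfAs' _ hx)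
  have hsA : ∀ x ∈ A, s x = 0 := by
    intro x hx
    refine le_antisymm (ciSup_le fun n => ?_) (hs0 x)
    rw [(hhA _).2 (hfnA n x hx)]
  have hsAs : ∀ x ∈ As, s x = 1 := by
    intro x hx
    refine le_antisymm (hs_le1 x) ?_
    rw [← (hhAs x).2 hx]
    exact hhx_le_s x
  have hsf : ∀ x, s (f x) ≤ s x := by
    intro x
    apply ciSup_le
    intro n
    rw [← Function.iterate_succ_apply]
    exact hh_le_s x (n + 1)
  have hs_posA : ∀ x, x ∉ A → 0 < s x := by
    intro x hx
    rcases lt_or_eq_of_le (hh0 x) with hp | hp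
    · exact lt_of_lt_of_le hp (hhx_le_s x)
    · exact absurd ((hhA x).1 hp.symm) hx
  -- orbit entering V
  have horb : ∀ N x, x ∉ W N → ∀ j, (⇑f)^[N + j] x ∈ V j := by
    intro N x hx j
    induction j with
    | zero =>
      have hxK : (⇑f)^[N] x ∉ K := hx
      have : (⇑f)^[N] x ∈ C := by
        by_contra hc
        exact hxK (hCcK hc)
      simpa [hV0] using this
    | succ m ih =>
      have : N + (m + 1) = (N + m) + 1 := by omega
      rw [this, Function.iterate_succ_apply']
      exact hfV m _ ih
  -- tail bound
  have htail : ∀ (ε : ℝ) (k : ℕ), (∀ y ∈ V k, h y < ε) → ∀ N x, x ∉ W N →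
      s ((⇑f)^[N + k] x) ≤ ε := by
    intro ε k hk N x hx
    apply ciSup_le
    intro m
    rw [← Function.iterate_add_apply]
    have h1 : (⇑f)^[m + (N + k)] x ∈ V (m + k) := by
      have : m + (N + k) = N + (m + k) := by omega
      rw [this]
      exact horb N x hx (m + k)
    exact (hk _ (hVmono k (m + k) (by omega) h1)).le
  -- Stage 4 : partial sups and continuity of s
  set q : ℕ → X → ℝ := fun M => Nat.rec h (fun m qm => fun x => max (qm x) (h ((⇑f)^[m+1] x))) M
    with hqdef
  have hq0 : ∀ x, q 0 x = h x := fun _ => rfl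
  have hqs : ∀ M x, q (M+1) x = max (q M x) (h ((⇑f)^[M+1] x)) := fun _ _ => rfl
  have qcont : ∀ M, Continuous (q M) := by
    intro M
    induction M with
    | zero => exact hhcont
    | succ m ih =>
      have : Continuous fun x => h ((⇑f)^[m+1] x) := hhcont.comp ((f.continuous).iterate _)
      exact ih.max this
  have q_ge : ∀ M m, m ≤ M → ∀ x, h ((⇑f)^[m] x) ≤ q M x := by
    intro M
    induction M with
    | zero =>
      intro m hm x
      interval_cases m
      simp [hq0]
    | succ M ih =>
      intro m hm x
      rcases Nat.lt_or_ge m (M + 1) with hlt | hge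
      · exact le_trans (ih m (by omega) x) (by rw [hqs]; exact le_max_left _ _)
      · have : m = M + 1 := by omega
        subst this
        rw [hqs]
        exact le_max_right _ _
  have q_le_s : ∀ M x, q M x ≤ s x := by
    intro M
    induction M with
    | zero => intro x; rw [hq0]; exact hhx_le_s x
    | succ M ih =>
      intro x
      rw [hqs]
      exact max_le (ih x) (hh_le_s x (M+1))
  have q_nonneg : ∀ M x, 0 ≤ q M x := by
    intro M x
    have := q_ge M 0 (Nat.zero_le _) x
    simpa using le_trans (hh0 x) this
  have s_le_max : ∀ M x, s x ≤ max (q M x) (s ((⇑f)^[M] x)) := by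
    intro M x
    apply ciSup_le
    intro n
    rcases Nat.lt_or_ge n (M+1) with hlt | hge
    · exact le_trans (q_ge M n (by omega) x) (le_max_left _ _)
    · obtain ⟨j, rfl⟩ : ∃ j, n = M + j := ⟨n - M, by omega⟩
      have : (⇑f)^[M + j] x = (⇑f)^[j] ((⇑f)^[M] x) := by
        rw [Nat.add_comm, Function.iterate_add_apply]
      rw [this]
      exact le_trans (hh_le_s _ j) (le_max_right _ _)
  have q_lt_one : ∀ M x, (∀ m, h ((⇑f)^[m] x) < 1) → q M x < 1 := by
    intro M x hx
    induction M with
    | zero => rw [hq0]; simpa using hx 0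
    | succ M ih => rw [hqs]; exact max_lt ih (hx (M+1))
  have hnotAs : ∀ x, x ∉ As → ∃ N, x ∉ W N := by
    intro x hx
    by_contra hcon
    push_neg at hcon
    exact hx (mem_iInter.2 hcon)
  have s_lt_one : ∀ x, x ∉ As → s x < 1 := by
    intro x hx
    obtain ⟨N, hN⟩ := hnotAs x hx
    obtain ⟨k, hk⟩ := L1 (1/2) (by norm_num)
    have h1 : s x ≤ max (q (N+k) x) (s ((⇑f)^[N+k] x)) := s_le_max _ x
    have h2 : s ((⇑f)^[N+k] x) ≤ 1/2 := htail _ _ hk N x hN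
    have h3 : q (N+k) x < 1 := by
      apply q_lt_one
      intro m
      refine lt_of_le_of_ne (hh1 _) (fun he => hx (hfnAs' m x ((hhAs _).1 he)))
    exact lt_of_le_of_lt h1 (max_lt h3 (by linarith))
  have s_cont : Continuous s := by
    rw [continuous_iff_continuousAt]
    intro x
    by_cases hx : x ∈ As
    · have hx1 : s x = 1 := hsAs x hx
      rw [ContinuousAt, hx1]
      apply tendsto_order.2
      constructor
      · intro a ha
        have hmem : h ⁻¹' Ioi a ∈ 𝓝 x := by
          apply hhcont.continuousAt
          exact Ioi_mem_nhds (by rw [(hhAs x).2 hx]; exact ha)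
        filter_upwards [hmem] with y hy
        exact lt_of_lt_of_le hy (hhx_le_s y)
      · intro b hb
        filter_upwards with y
        exact lt_of_le_of_lt (hs_le1 y) hb
    · rw [Metric.continuousAt_iff]
      intro ε hε
      obtain ⟨N, hN⟩ := hnotAs x hx
      obtain ⟨k, hk⟩ := L1 (ε/3) (by linarith)
      set M := N + k with hM
      have key : ∀ y, y ∉ W N → q M y ≤ s y ∧ s y ≤ q M y + ε/3 := by
        intro y hy
        refine ⟨q_le_s M y, ?_⟩
        have h1 : s y ≤ max (q M y) (s ((⇑f)^[M] y)) := s_le_max M y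
        have h2 : s ((⇑f)^[M] y) ≤ ε/3 := htail _ _ hk N y hy
        have h3 : max (q M y) (s ((⇑f)^[M] y)) ≤ q M y + ε/3 :=
          max_le (by linarith [q_nonneg M y]) (by linarith [q_nonneg M y])
        linarith
      obtain ⟨δ₁, hδ₁, hq₁⟩ := Metric.continuousAt_iff.1 (qcont M).continuousAt (ε/3) (by linarith)
      obtain ⟨δ₂, hδ₂, hb₂⟩ := Metric.isOpen_iff.1 (hWcl N).isOpen_compl x hN
      refine ⟨min δ₁ δ₂, lt_min hδ₁ hδ₂, ?_⟩
      intro y hy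
      have hyW : y ∉ W N := hb₂ (Metric.mem_ball.2 (lt_of_lt_of_le hy (min_le_right _ _)))
      have hqd : dist (q M y) (q M x) < ε/3 := hq₁ (lt_of_lt_of_le hy (min_le_left _ _))
      obtain ⟨ky1, ky2⟩ := key y hyW
      obtain ⟨kx1, kx2⟩ := key x hN
      rw [Real.dist_eq] at hqd ⊢
      rw [abs_lt] at hqd
      rw [abs_lt]
      constructor <;> linarith
  -- Stage 5 : the Lyapunov function g
  set c : ℕ → ℝ := fun n => (1/2:ℝ)^(n+1) with hcdef
  have hc_eq : c = fun n : ℕ => (1/2:ℝ)^n * (1/2) := by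
    funext n
    show (1/2:ℝ)^(n+1) = (1/2)^n * (1/2)
    rw [pow_succ]
  have hc_pos : ∀ n, 0 < c n := fun n => pow_pos (by norm_num) _
  have hc_sum : Summable c := by
    rw [hc_eq]
    exact summable_geometric_two.mul_right _
  have hc_tsum : ∑' n, c n = 1 := by
    rw [hc_eq, tsum_mul_right, tsum_geometric_two]
    norm_num
  set g : X → ℝ := fun x => ∑' n, c n * s ((⇑f)^[n] x) with hgdef
  have hterm_nonneg : ∀ x n, 0 ≤ c n * s ((⇑f)^[n] x) :=
    fun x n => mul_nonneg (hc_pos n).le (hs0 _)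
  have hterm_le : ∀ x n, c n * s ((⇑f)^[n] x) ≤ c n :=
    fun x n => mul_le_of_le_one_right (hc_pos n).le (hs_le1 _)
  have hgsummable : ∀ x, Summable fun n => c n * s ((⇑f)^[n] x) :=
    fun x => Summable.of_nonneg_of_le (hterm_nonneg x) (hterm_le x) hc_sum
  have hgcont : Continuous g := by
    apply continuous_tsum (u := c)
    · intro n
      exact continuous_const.mul (s_cont.comp ((f.continuous).iterate n))
    · exact hc_sum
    · intro n x
      rw [Real.norm_eq_abs, abs_of_nonneg (hterm_nonneg x n)]
      exact hterm_le x n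
  have hg0 : ∀ x, 0 ≤ g x := fun x => tsum_nonneg (hterm_nonneg x)
  have hg1 : ∀ x, g x ≤ 1 := by
    intro x
    calc g x ≤ ∑' n, c n := Summable.tsum_le_tsum (hterm_le x) (hgsummable x) hc_sum
    _ = 1 := hc_tsum
  have hgA : ∀ x, g x = 0 ↔ x ∈ A := by
    intro x
    constructor
    · intro hg
      have h1 : c 0 * s ((⇑f)^[0] x) ≤ g x :=
        Summable.le_tsum (hgsummable x) 0 (fun j _ => hterm_nonneg x j)
      rw [hg] at h1
      have h2 : c 0 * s x ≤ 0 := by simpa using h1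
      have h3 : s x = 0 := by
        by_contra hc3
        have : 0 < s x := lt_of_le_of_ne (hs0 x) (Ne.symm hc3)
        nlinarith [hc_pos 0]
      have : h x = 0 := le_antisymm (h3 ▸ hhx_le_s x) (hh0 x)
      exact (hhA x).1 this
    · intro hx
      rw [hgdef]
      have : ∀ n : ℕ, c n * s ((⇑f)^[n] x) = 0 := by
        intro n
        rw [hsA _ (hfnA n x hx), mul_zero]
      simp only [this, tsum_zero]
  have hgAs : ∀ x, g x = 1 ↔ x ∈ As := by
    intro x
    constructor
    · intro hg
      by_contra hx
      have h1 : s x < 1 := s_lt_one x hx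
      have h2 : g x < ∑' n, c n := by
        apply Summable.tsum_lt_tsum (i := 0) (hterm_le x) _ (hgsummable x) hc_sum
        have : c 0 * s ((⇑f)^[0] x) = c 0 * s x := by simp
        rw [this]
        nlinarith [hc_pos 0]
      rw [hg, hc_tsum] at h2
      exact lt_irrefl _ h2
    · intro hx
      have : ∀ n : ℕ, c n * s ((⇑f)^[n] x) = c n := by
        intro n
        rw [hsAs _ (hfnAs n x hx), mul_one]
      rw [hgdef]
      simp only [this]
      exact hc_tsum
  have hdec : ∀ x, x ∉ A → x ∉ As → g (f x) < g x := by
    intro x hxA hxAs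
    have hspos : 0 < s x := hs_posA x hxA
    -- the orbit values of s are nonincreasing
    have hmono : ∀ n : ℕ, s ((⇑f)^[n+1] x) ≤ s ((⇑f)^[n] x) := by
      intro n
      rw [Function.iterate_succ_apply']
      exact hsf _
    -- find a strict drop
    obtain ⟨N, hN⟩ := hnotAs x hxAs
    obtain ⟨k, hk⟩ := L1 (s x / 2) (by linarith)
    have hMlt : s ((⇑f)^[N+k] x) < s x := by
      have := htail _ _ hk N x hN
      linarith
    have hstep : ∃ n, s ((⇑f)^[n+1] x) < s ((⇑f)^[n] x) := by
      by_contra hcon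
      push_neg at hcon
      have hconst : ∀ n : ℕ, s ((⇑f)^[n] x) = s x := by
        intro n
        induction n with
        | zero => simp
        | succ m ih => exact le_antisymm (ih ▸ hmono m) (ih ▸ hcon m)
      rw [hconst (N+k)] at hMlt
      exact lt_irrefl _ hMlt
    obtain ⟨n₀, hn₀⟩ := hstep
    rw [hgdef]
    have hrw : ∀ n : ℕ, s ((⇑f)^[n] (f x)) = s ((⇑f)^[n+1] x) := by
      intro n
      rw [Function.iterate_succ_apply]
    apply Summable.tsum_lt_tsum (i := n₀)
    · intro n
      show c n * s ((⇑f)^[n] (f x)) ≤ c n * s ((⇑f)^[n] x)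
      rw [hrw n]
      exact mul_le_mul_of_nonneg_left (hmono n) (hc_pos n).le
    · show c n₀ * s ((⇑f)^[n₀] (f x)) < c n₀ * s ((⇑f)^[n₀] x)
      rw [hrw n₀]
      exact (mul_lt_mul_iff_right₀ (hc_pos n₀)).2 hn₀
    · exact hgsummable (f x)
    · exact hgsummable x
  -- conclusion
  have hconcA : g ⁻¹' {0} = A := by
    ext x
    simp only [mem_preimage, mem_singleton_iff]
    exact hgA x
  have hconcAs : g ⁻¹' {1} = As := by
    ext x
    simp only [mem_preimage, mem_singleton_iff]
    exact hgAs x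
  refine ⟨g, hgcont, fun x => ⟨hg0 x, hg1 x⟩, hconcA, hconcAs, ?_⟩
  intro x hx
  rw [Set.mem_union] at hx
  push_neg at hx
  exact hdec x hx.1 hx.2

theorem exists_lyapunov_pair [CompactSpace X] (f : X ≃ₜ X) (A Astar : Set X)
    (h : IsDualPair f A Astar) :
    ∃ g : X → ℝ, Continuous g ∧ (∀ x, g x ∈ Set.Icc (0:ℝ) 1) ∧
      g ⁻¹' {0} = A ∧ g ⁻¹' {1} = Astar ∧
      ∀ x ∉ A ∪ Astar, g (f x) < g x := by
  obtain ⟨hAcomp, U, ⟨hUopen, hAU, hfU, hInt⟩, hAstarEq⟩ := h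
  by_cases hCe : closure U = ∅
  · have hAe : A = ∅ := by rw [← hInt, hCe]; simp [Set.iInter_eq_empty_iff]
    have hAse : Astar = univ := by
      rw [hAstarEq, hCe]
      simp
    refine ⟨fun _ => 1, continuous_const, fun x => ⟨zero_le_one, le_refl 1⟩, ?_, ?_, ?_⟩
    · rw [hAe]; ext x; simp
    · rw [hAse]; ext x; simp
    · intro x hx; exfalso; rw [hAse] at hx; simp at hx
  · by_cases hCu : closure U = univ
    · have hAse : Astar = ∅ := by rw [hAstarEq, hCu]; simp [Set.iInter_eq_empty_iff]
      have hAu : A = univ := by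
        rw [← hInt, hCu]
        ext x
        simp [Set.image_univ, (f.surjective.iterate _).range_eq]
      refine ⟨fun _ => 0, continuous_const, fun x => ⟨le_refl 0, zero_le_one⟩, ?_, ?_, ?_⟩
      · rw [hAu]; ext x; simp
      · rw [hAse]; ext x; simp
      · intro x hx; exfalso; rw [hAu] at hx; simp at hx
    · obtain ⟨g, hc, hi, h0, h1, hd⟩ := conley_aux f U hUopen hfU
        (nonempty_iff_ne_empty.2 hCe) hCu
      exact ⟨g, hc, hi, h0.trans hInt, h1.trans hAstarEq.symm,
        by rw [← hInt, hAstarEq]; exact hd⟩
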